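/- The variance of the stratified mixture–mixture estimator is at most the variance of the i.i.d. mixture–mixture estimator: Var[MM^str(g)] ≤ Var[MM(g)]. More precisely, Var[MM(g)] = Var[MM^str(g)] + (1/N)·[ (1/N)·Σ_{j=1}^N a_j² − I² ], where a_j := ∫ (p_mix·g/q_mix)·q_j dx and I := ∫ p_mix·g dx (both sides of the variance inequality being allowed to be infinite). -/

import Mathlib

open MeasureTheory ProbabilityTheory
open scoped ENNReal NNReal


lemma ennreal_sq_add_le (a b : ℝ≥0∞) : (a + b) ^ 2 ≤ 3 * (a ^ 2 + b ^ 2) := by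
  have hab : a * b ≤ a ^ 2 + b ^ 2 := by
    rcases le_total a b with h | h
    · calc a * b ≤ b * b := mul_le_mul' h le_rfl
        _ = b ^ 2 := (sq b).symm
        _ ≤ a ^ 2 + b ^ 2 := le_add_self
    · calc a * b ≤ a * a := mul_le_mul' le_rfl h
        _ = a ^ 2 := (sq a).symm
        _ ≤ a ^ 2 + b ^ 2 := le_self_add
  calc (a + b) ^ 2 = (a ^ 2 + b ^ 2) + 2 * (a * b) := by ring
    _ ≤ (a ^ 2 + b ^ 2) + 2 * (a ^ 2 + b ^ 2) := by gcongr
    _ = 3 * (a ^ 2 + b ^ 2) := by ring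

lemma aux_indep_sq_top {Ω : Type} [MeasurableSpace Ω] {μ : Measure Ω} [IsProbabilityMeasure μ]
    {V W : Ω → ℝ} (hV : Measurable V) (hW : Measurable W)
    (h : IndepFun V W μ) (hW2 : ∫⁻ ω, (‖W ω‖₊ : ℝ≥0∞) ^ 2 ∂μ = ⊤) :
    ∫⁻ ω, (‖V ω + W ω‖₊ : ℝ≥0∞) ^ 2 ∂μ = ⊤ := by
  have hmap : μ.map (fun ω => (V ω, W ω)) = (μ.map V).prod (μ.map W) :=
    (indepFun_iff_map_prod_eq_prod_map_map hV.aemeasurable hW.aemeasurable).mp h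
  have hmeas : Measurable (fun p : ℝ × ℝ => (‖p.1 + p.2‖₊ : ℝ≥0∞) ^ 2) :=
    ((measurable_fst.add measurable_snd).nnnorm.coe_nnreal_ennreal).pow_const 2
  have h1 : ∫⁻ ω, (‖V ω + W ω‖₊ : ℝ≥0∞) ^ 2 ∂μ
      = ∫⁻ p : ℝ × ℝ, (‖p.1 + p.2‖₊ : ℝ≥0∞) ^ 2 ∂((μ.map V).prod (μ.map W)) := by
    rw [← hmap, lintegral_map hmeas (hV.prodMk hW)]
  have hWlaw : ∫⁻ w, (‖w‖₊ : ℝ≥0∞) ^ 2 ∂(μ.map W) = ⊤ := by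
    rw [lintegral_map (measurable_nnnorm.coe_nnreal_ennreal.pow_const 2) hW]; exact hW2
  have inner : ∀ v : ℝ, ∫⁻ w, (‖v + w‖₊ : ℝ≥0∞) ^ 2 ∂(μ.map W) = ⊤ := by
    intro v
    by_contra hfin
    have key : ∀ w : ℝ, (‖w‖₊ : ℝ≥0∞) ^ 2
        ≤ 3 * ((‖v + w‖₊ : ℝ≥0∞) ^ 2 + (‖v‖₊ : ℝ≥0∞) ^ 2) := by
      intro w
      have h0 : ‖w‖₊ ≤ ‖v + w‖₊ + ‖v‖₊ := by
        have he : w = (v + w) - v := by ring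
        calc ‖w‖₊ = ‖(v + w) - v‖₊ := by rw [← he]
          _ ≤ ‖v + w‖₊ + ‖v‖₊ := nnnorm_sub_le _ _
      calc (‖w‖₊ : ℝ≥0∞) ^ 2 ≤ ((‖v + w‖₊ : ℝ≥0∞) + (‖v‖₊ : ℝ≥0∞)) ^ 2 := by
            gcongr
            exact_mod_cast h0
        _ ≤ 3 * ((‖v + w‖₊ : ℝ≥0∞) ^ 2 + (‖v‖₊ : ℝ≥0∞) ^ 2) := ennreal_sq_add_le _ _
    have hle : (⊤ : ℝ≥0∞) ≤ ∫⁻ w, 3 * ((‖v + w‖₊ : ℝ≥0∞) ^ 2 + (‖v‖₊ : ℝ≥0∞) ^ 2) ∂(μ.map W) := by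
      rw [← hWlaw]
      exact lintegral_mono key
    have : IsProbabilityMeasure (μ.map W) := Measure.isProbabilityMeasure_map hW.aemeasurable
    rw [lintegral_const_mul 3 (f := fun w => (‖v + w‖₊ : ℝ≥0∞) ^ 2 + (‖v‖₊ : ℝ≥0∞) ^ 2) (((measurable_const.add measurable_id').nnnorm.coe_nnreal_ennreal.pow_const 2).add
        measurable_const), lintegral_add_right _ measurable_const, lintegral_const] at hle
    simp only [measure_univ, mul_one] at hle
    have hne : (3 : ℝ≥0∞) * (∫⁻ w, (‖v + w‖₊ : ℝ≥0∞) ^ 2 ∂(μ.map W) + (‖v‖₊ : ℝ≥0∞) ^ 2) ≠ ⊤ := by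
      apply ENNReal.mul_ne_top (by norm_num)
      exact ENNReal.add_ne_top.mpr ⟨hfin, ENNReal.pow_ne_top ENNReal.coe_ne_top⟩
    exact hne (top_le_iff.mp hle)
  have : IsProbabilityMeasure (μ.map V) := Measure.isProbabilityMeasure_map hV.aemeasurable
  rw [h1, lintegral_prod _ hmeas.aemeasurable]
  calc ∫⁻ v, ∫⁻ w, (‖v + w‖₊ : ℝ≥0∞) ^ 2 ∂(μ.map W) ∂(μ.map V)
      = ∫⁻ _, (⊤ : ℝ≥0∞) ∂(μ.map V) := lintegral_congr inner
    _ = ⊤ := by simp [lintegral_const]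

lemma aux_evariance_top {Ω : Type} [MeasurableSpace Ω] {μ : Measure Ω} [IsProbabilityMeasure μ]
    {N : ℕ} {Z : Fin N → Ω → ℝ} (hZm : ∀ i, Measurable (Z i))
    (hindep : iIndepFun Z μ) (j : Fin N)
    (hj : ∫⁻ ω, (‖Z j ω‖₊ : ℝ≥0∞) ^ 2 ∂μ = ⊤) {c : ℝ} (hc : c ≠ 0) :
    evariance (fun ω => c * ∑ i, Z i ω) μ = ⊤ := by
  have hSm : Measurable (fun ω => ∑ i, Z i ω) := Finset.measurable_sum _ fun i _ => hZm i
  have h1 : ∫⁻ ω, (‖∑ i, Z i ω‖₊ : ℝ≥0∞) ^ 2 ∂μ = ⊤ := by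
    have hVind : IndepFun (∑ i ∈ Finset.univ.erase j, Z i) (Z j) μ :=
      hindep.indepFun_finset_sum_of_notMem hZm (Finset.notMem_erase j _)
    have hVind' : IndepFun (fun ω => ∑ i ∈ Finset.univ.erase j, Z i ω) (Z j) μ := by
      have he : (fun ω => ∑ i ∈ Finset.univ.erase j, Z i ω)
          = ∑ i ∈ Finset.univ.erase j, Z i := by
        ext ω; simp [Finset.sum_apply]
      rw [he]; exact hVind
    have htop := aux_indep_sq_top (Finset.measurable_sum _ fun i _ => hZm i) (hZm j) hVind' hj
    have hsplit : ∀ ω, ∑ i, Z i ω = (∑ i ∈ Finset.univ.erase j, Z i ω) + Z j ω := fun ω =>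
      (Finset.sum_erase_add _ _ (Finset.mem_univ j)).symm
    simp_rw [hsplit]; exact htop
  have hmeas : AEStronglyMeasurable (fun ω => c * ∑ i, Z i ω) μ :=
    (hSm.const_mul c).aestronglyMeasurable
  rw [evariance_def' hmeas]
  simp_rw [enorm_eq_nnnorm]
  have h2 : ∫⁻ ω, (‖c * ∑ i, Z i ω‖₊ : ℝ≥0∞) ^ 2 ∂μ = ⊤ := by
    have hpt : ∀ ω, (‖c * ∑ i, Z i ω‖₊ : ℝ≥0∞) ^ 2
        = (‖c‖₊ : ℝ≥0∞) ^ 2 * (‖∑ i, Z i ω‖₊ : ℝ≥0∞) ^ 2 := by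
      intro ω; rw [nnnorm_mul]; push_cast; ring
    simp_rw [hpt]
    rw [lintegral_const_mul _ (hSm.nnnorm.coe_nnreal_ennreal.pow_const 2), h1, ENNReal.mul_top]
    simpa using hc
  rw [h2]
  exact ENNReal.top_sub ENNReal.ofReal_ne_top

/-- `Var[MM^str(g)] ≤ Var[MM(g)]`; more precisely
`Var[MM(g)] = Var[MM^str(g)] + (1/N)·[(1/N)·Σ_j a_j² − I²]` where
`a_j = ∫ (p_mix·g/q_mix)·q_j` and `I = ∫ p_mix·g` (variances taken in `[0,∞]`). -/
theorem variance_MMstr_le_variance_MM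
    {d N : ℕ} (hN : 1 ≤ N)
    {Ω : Type} [MeasurableSpace Ω] (μ : Measure Ω) [IsProbabilityMeasure μ]
    (p q : Fin N → (Fin d → ℝ) → ℝ)
    (hp0 : ∀ i x, 0 ≤ p i x) (hq0 : ∀ i x, 0 ≤ q i x)
    (hpm : ∀ i, Measurable (p i)) (hqm : ∀ i, Measurable (q i))
    (hp1 : ∀ i, ∫ x, p i x = 1) (hq1 : ∀ i, ∫ x, q i x = 1)
    (pmix qmix : (Fin d → ℝ) → ℝ)
    (hpmix : ∀ x, pmix x = (N : ℝ)⁻¹ * ∑ i, p i x)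
    (hqmix : ∀ x, qmix x = (N : ℝ)⁻¹ * ∑ i, q i x)
    -- absolute continuity p_mix ≪ q_i
    (habs : ∀ i, ∀ᵐ x : Fin d → ℝ ∂volume, q i x = 0 → pmix x = 0)
    (g : (Fin d → ℝ) → ℝ) (hgm : Measurable g)
    -- ∫ p_mix · g² dx < ∞
    (hgL2 : Integrable (fun x => pmix x * (g x) ^ 2) volume)
    -- X_i independent with density q_i; Y_i i.i.d. with density q_mix
    (X Y : Fin N → Ω → (Fin d → ℝ))
    (hXm : ∀ i, Measurable (X i)) (hYm : ∀ i, Measurable (Y i))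
    (hXindep : iIndepFun X μ)
    (hYindep : iIndepFun Y μ)
    (hXlaw : ∀ i, Measure.map (X i) μ =
      volume.withDensity (fun x => ENNReal.ofReal (q i x)))
    (hYlaw : ∀ i, Measure.map (Y i) μ =
      volume.withDensity (fun x => ENNReal.ofReal (qmix x)))
    (I : ℝ) (hI : I = ∫ x, pmix x * g x)
    (a : Fin N → ℝ) (ha : ∀ j, a j = ∫ x, (pmix x * g x / qmix x) * q j x) :
    -- Var[MM(g)] = Var[MM^str(g)] + (1/N)·[(1/N)·Σ_j a_j² − I²]
    evariance (fun ω => (N : ℝ)⁻¹ * ∑ i, (pmix (Y i ω) / qmix (Y i ω)) * g (Y i ω)) μ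
      = evariance (fun ω => (N : ℝ)⁻¹ * ∑ i, (pmix (X i ω) / qmix (X i ω)) * g (X i ω)) μ
        + ENNReal.ofReal ((N : ℝ)⁻¹ * ((N : ℝ)⁻¹ * ∑ j, (a j) ^ 2 - I ^ 2)) ∧
    -- Var[MM^str(g)] ≤ Var[MM(g)]
    evariance (fun ω => (N : ℝ)⁻¹ * ∑ i, (pmix (X i ω) / qmix (X i ω)) * g (X i ω)) μ
      ≤ evariance (fun ω => (N : ℝ)⁻¹ * ∑ i, (pmix (Y i ω) / qmix (Y i ω)) * g (Y i ω)) μ := by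
    classical
  have hN0 : (0 : ℝ) < N := by exact_mod_cast hN
  have hNne : (N : ℝ) ≠ 0 := ne_of_gt hN0
  set f : (Fin d → ℝ) → ℝ := fun x => pmix x * g x / qmix x with hf_def
  have hfx : ∀ x : Fin d → ℝ, pmix x / qmix x * g x = f x := fun x =>
    div_mul_eq_mul_div _ _ _
  simp only [hfx]
  -- measurability
  have hpmixm : Measurable pmix := by
    have he : pmix = fun x => (N : ℝ)⁻¹ * ∑ i, p i x := funext hpmix
    rw [he]; exact (Finset.measurable_sum _ fun i _ => hpm i).const_mul _
  have hqmixm : Measurable qmix := by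
    have he : qmix = fun x => (N : ℝ)⁻¹ * ∑ i, q i x := funext hqmix
    rw [he]; exact (Finset.measurable_sum _ fun i _ => hqm i).const_mul _
  have hfm : Measurable f := (hpmixm.mul hgm).div hqmixm
  have hpmix0 : ∀ x, 0 ≤ pmix x := fun x => by
    rw [hpmix]
    exact mul_nonneg (by positivity) (Finset.sum_nonneg fun i _ => hp0 i x)
  have hqmix0 : ∀ x, 0 ≤ qmix x := fun x => by
    rw [hqmix]
    exact mul_nonneg (by positivity) (Finset.sum_nonneg fun i _ => hq0 i x)
  -- q i ≤ N * qmix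
  have hsumq : ∀ x, ∑ i, q i x = N * qmix x := by
    intro x; rw [hqmix]; field_simp
  have hqle : ∀ i x, q i x ≤ N * qmix x := by
    intro i x
    rw [← hsumq]
    exact Finset.single_le_sum (fun k _ => hq0 k x) (Finset.mem_univ i)
  have hqzero : ∀ i x, qmix x = 0 → q i x = 0 := by
    intro i x h
    have := hqle i x
    rw [h, mul_zero] at this
    exact le_antisymm this (hq0 i x)
  have hkey : ∀ᵐ x ∂(volume : Measure (Fin d → ℝ)), qmix x = 0 → pmix x = 0 := by
    filter_upwards [habs ⟨0, hN⟩] with x hx h0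
    exact hx (hqzero _ x h0)
  have hfq : (fun x => f x * qmix x)
      =ᵐ[(volume : Measure (Fin d → ℝ))] fun x => pmix x * g x := by
    filter_upwards [hkey] with x hx
    by_cases h0 : qmix x = 0
    · simp [hf_def, h0, hx h0]
    · simp only [hf_def]
      field_simp
  -- integrability of pmix * g
  have hpint : ∀ i, Integrable (p i) (volume : Measure (Fin d → ℝ)) := by
    intro i
    by_contra h
    have := hp1 i
    rw [integral_undef h] at this
    norm_num at this
  have hpmixint : Integrable pmix (volume : Measure (Fin d → ℝ)) := by
    have h1 : Integrable (fun x => (N : ℝ)⁻¹ * ∑ i, p i x) volume :=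
      (integrable_finset_sum _ fun i _ => hpint i).const_mul _
    exact h1.congr (ae_of_all _ fun x => (hpmix x).symm)
  have hpg : Integrable (fun x => pmix x * g x) (volume : Measure (Fin d → ℝ)) := by
    have hbound : Integrable (fun x => pmix x + pmix x * g x ^ 2)
        (volume : Measure (Fin d → ℝ)) := hpmixint.add hgL2
    refine hbound.mono' (hpmixm.mul hgm).aestronglyMeasurable
      (ae_of_all _ fun x => ?_)
    rw [Real.norm_eq_abs, abs_mul, abs_of_nonneg (hpmix0 x)]
    nlinarith [hpmix0 x, sq_nonneg (|g x| - 1), sq_abs (g x), abs_nonneg (g x),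
      mul_nonneg (hpmix0 x) (sq_nonneg (|g x| - 1))]
  have hfqint : Integrable (fun x => f x * qmix x) (volume : Measure (Fin d → ℝ)) :=
    hpg.congr hfq.symm
  have hIeq : ∫ x, f x * qmix x = I := by
    rw [hI]; exact integral_congr_ae hfq
  have hfqiint : ∀ i, Integrable (fun x => f x * q i x) (volume : Measure (Fin d → ℝ)) := by
    intro i
    refine (hfqint.abs.const_mul (N : ℝ)).mono' (hfm.mul (hqm i)).aestronglyMeasurable
      (ae_of_all _ fun x => ?_)
    rw [Real.norm_eq_abs, abs_mul, abs_of_nonneg (hq0 i x)]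
    calc |f x| * q i x ≤ |f x| * (N * qmix x) := by
          have := hqle i x
          exact mul_le_mul_of_nonneg_left this (abs_nonneg _)
      _ = N * |f x * qmix x| := by
          rw [abs_mul, abs_of_nonneg (hqmix0 x)]; ring
  have ha' : ∀ j, a j = ∫ x, f x * q j x := ha
  have hasum : ∑ j, a j = N * I := by
    have h1 : ∑ j, a j = ∫ x, ∑ j, f x * q j x := by
      rw [integral_finset_sum _ fun i _ => hfqiint i]
      exact Finset.sum_congr rfl fun j _ => ha' j
    rw [h1]
    have h2 : (fun x => ∑ j, f x * q j x) = fun x => (N : ℝ) * (f x * qmix x) := by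
      funext x
      rw [← Finset.mul_sum, hsumq]; ring
    rw [h2, integral_const_mul, hIeq]
  -- lintegral second moments
  set F : (Fin d → ℝ) → ℝ≥0∞ := fun x => (‖f x‖₊ : ℝ≥0∞) ^ 2 with hF_def
  have hFm : Measurable F := hfm.nnnorm.coe_nnreal_ennreal.pow_const 2
  have hQim : ∀ i, Measurable fun x => ENNReal.ofReal (q i x) := fun i =>
    ENNReal.measurable_ofReal.comp (hqm i)
  have hQmixm : Measurable fun x => ENNReal.ofReal (qmix x) :=
    ENNReal.measurable_ofReal.comp hqmixm
  set K : ℝ≥0∞ := ∫⁻ x, ENNReal.ofReal (qmix x) * F x with hK_def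
  set Ki : Fin N → ℝ≥0∞ := fun i => ∫⁻ x, ENNReal.ofReal (q i x) * F x with hKi_def
  have hKsum : ∑ i, Ki i = N * K := by
    have h1 : ∀ x, ∑ i, ENNReal.ofReal (q i x) * F x
        = (N : ℝ≥0∞) * (ENNReal.ofReal (qmix x) * F x) := by
      intro x
      rw [← Finset.sum_mul, ← ENNReal.ofReal_sum_of_nonneg fun i _ => hq0 i x, hsumq,
        ENNReal.ofReal_mul hN0.le, ENNReal.ofReal_natCast]
      ring
    calc ∑ i, Ki i = ∫⁻ x, ∑ i, ENNReal.ofReal (q i x) * F x ∂volume :=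
          (lintegral_finset_sum _ fun i _ => (hQim i).mul hFm).symm
      _ = ∫⁻ x, (N : ℝ≥0∞) * (ENNReal.ofReal (qmix x) * F x) ∂volume := by
          exact lintegral_congr h1
      _ = (N : ℝ≥0∞) * K := lintegral_const_mul _ (hQmixm.mul hFm)
  have hX2 : ∀ i, ∫⁻ ω, (‖f (X i ω)‖₊ : ℝ≥0∞) ^ 2 ∂μ = Ki i := by
    intro i
    calc ∫⁻ ω, (‖f (X i ω)‖₊ : ℝ≥0∞) ^ 2 ∂μ = ∫⁻ x, F x ∂(μ.map (X i)) := by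
          rw [lintegral_map hFm (hXm i)]
      _ = Ki i := by
          rw [hXlaw i, lintegral_withDensity_eq_lintegral_mul _ (hQim i) hFm]
          rfl
  have hY2 : ∀ i, ∫⁻ ω, (‖f (Y i ω)‖₊ : ℝ≥0∞) ^ 2 ∂μ = K := by
    intro i
    calc ∫⁻ ω, (‖f (Y i ω)‖₊ : ℝ≥0∞) ^ 2 ∂μ = ∫⁻ x, F x ∂(μ.map (Y i)) := by
          rw [lintegral_map hFm (hYm i)]
      _ = K := by
          rw [hYlaw i, lintegral_withDensity_eq_lintegral_mul _ hQmixm hFm]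
          rfl
  -- independence of composed families
  have hXind2 : iIndepFun (fun i => f ∘ X i) μ :=
    hXindep.comp (fun _ => f) fun _ => hfm
  have hYind2 : iIndepFun (fun i => f ∘ Y i) μ :=
    hYindep.comp (fun _ => f) fun _ => hfm
  -- main equality
  have main : evariance (fun ω => (N : ℝ)⁻¹ * ∑ i, f (Y i ω)) μ
      = evariance (fun ω => (N : ℝ)⁻¹ * ∑ i, f (X i ω)) μ
        + ENNReal.ofReal ((N : ℝ)⁻¹ * ((N : ℝ)⁻¹ * ∑ j, (a j) ^ 2 - I ^ 2)) := by
    by_cases hKtop : K = ⊤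
    · -- infinite case
      have hYtop : evariance (fun ω => (N : ℝ)⁻¹ * ∑ i, f (Y i ω)) μ = ⊤ := by
        refine aux_evariance_top (Z := fun i => f ∘ Y i) (fun i => hfm.comp (hYm i)) hYind2
          ⟨0, hN⟩ ?_ (inv_ne_zero hNne)
        show ∫⁻ ω, (‖f (Y (⟨0, hN⟩ : Fin N) ω)‖₊ : ℝ≥0∞) ^ 2 ∂μ = ⊤
        rw [hY2]; exact hKtop
      obtain ⟨j, hj⟩ : ∃ j, Ki j = ⊤ := by
        by_contra h
        push_neg at h
        have hne : ∑ i, Ki i ≠ ⊤ :=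
          (ENNReal.sum_lt_top.mpr fun i _ => lt_top_iff_ne_top.mpr (h i)).ne
        have hNtop : (N : ℝ≥0∞) ≠ 0 := by
          exact_mod_cast Nat.one_le_iff_ne_zero.mp hN
        rw [hKsum, hKtop, ENNReal.mul_top hNtop] at hne
        exact hne rfl
      have hXtop : evariance (fun ω => (N : ℝ)⁻¹ * ∑ i, f (X i ω)) μ = ⊤ := by
        refine aux_evariance_top (Z := fun i => f ∘ X i) (fun i => hfm.comp (hXm i)) hXind2
          j ?_ (inv_ne_zero hNne)
        show ∫⁻ ω, (‖f (X j ω)‖₊ : ℝ≥0∞) ^ 2 ∂μ = ⊤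
        rw [hX2]; exact hj
      rw [hYtop, hXtop, top_add]
    · -- finite case
      have hsumne : (∑ i, Ki i) ≠ ⊤ := by
        rw [hKsum]; exact ENNReal.mul_ne_top (ENNReal.natCast_ne_top N) hKtop
      have hKilt : ∀ i, Ki i ≠ ⊤ := fun i =>
        ne_top_of_le_ne_top hsumne (Finset.single_le_sum (fun k _ => zero_le)
          (Finset.mem_univ i))
      -- Memℒp
      have hmemX : ∀ i, MemLp (fun ω => f (X i ω)) 2 μ := by
        intro i
        have hasm : AEStronglyMeasurable (fun ω => f (X i ω)) μ :=
          (hfm.comp (hXm i)).aestronglyMeasurable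
        rw [memLp_two_iff_integrable_sq hasm]
        refine ⟨((hfm.comp (hXm i)).pow_const 2).aestronglyMeasurable, ?_⟩
        rw [hasFiniteIntegral_def _ _]; simp only [enorm_eq_nnnorm]
        have he : ∀ ω, ((‖f (X i ω) ^ 2‖₊ : ℝ≥0∞)) = (‖f (X i ω)‖₊ : ℝ≥0∞) ^ 2 := by
          intro ω; rw [nnnorm_pow]; push_cast; ring
        rw [lintegral_congr he, hX2 i]
        exact lt_top_iff_ne_top.mpr (hKilt i)
      have hmemY : ∀ i, MemLp (fun ω => f (Y i ω)) 2 μ := by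
        intro i
        have hasm : AEStronglyMeasurable (fun ω => f (Y i ω)) μ :=
          (hfm.comp (hYm i)).aestronglyMeasurable
        rw [memLp_two_iff_integrable_sq hasm]
        refine ⟨((hfm.comp (hYm i)).pow_const 2).aestronglyMeasurable, ?_⟩
        rw [hasFiniteIntegral_def _ _]; simp only [enorm_eq_nnnorm]
        have he : ∀ ω, ((‖f (Y i ω) ^ 2‖₊ : ℝ≥0∞)) = (‖f (Y i ω)‖₊ : ℝ≥0∞) ^ 2 := by
          intro ω; rw [nnnorm_pow]; push_cast; ring
        rw [lintegral_congr he, hY2 i]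
        exact lt_top_iff_ne_top.mpr hKtop
      -- real second moments
      set M : ℝ := ∫ x, f x ^ 2 * qmix x with hM_def
      set Mi : Fin N → ℝ := fun i => ∫ x, f x ^ 2 * q i x with hMi_def
      have hMiint : ∀ i, Integrable (fun x => f x ^ 2 * q i x)
          (volume : Measure (Fin d → ℝ)) := by
        intro i
        refine ⟨((hfm.pow_const 2).mul (hqm i)).aestronglyMeasurable, ?_⟩
        rw [hasFiniteIntegral_def _ _]; simp only [enorm_eq_nnnorm]
        have he : ∀ x, ((‖f x ^ 2 * q i x‖₊ : ℝ≥0∞)) = ENNReal.ofReal (q i x) * F x := by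
          intro x
          rw [nnnorm_mul, nnnorm_pow, ENNReal.coe_mul, ENNReal.coe_pow, hF_def,
            ← Real.enorm_eq_ofReal (hq0 i x), enorm_eq_nnnorm]
          ring
        rw [lintegral_congr he]
        exact lt_top_iff_ne_top.mpr (hKilt i)
      have hMint : Integrable (fun x => f x ^ 2 * qmix x)
          (volume : Measure (Fin d → ℝ)) := by
        refine ⟨((hfm.pow_const 2).mul hqmixm).aestronglyMeasurable, ?_⟩
        rw [hasFiniteIntegral_def _ _]; simp only [enorm_eq_nnnorm]
        have he : ∀ x, ((‖f x ^ 2 * qmix x‖₊ : ℝ≥0∞)) = ENNReal.ofReal (qmix x) * F x := by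
          intro x
          rw [nnnorm_mul, nnnorm_pow, ENNReal.coe_mul, ENNReal.coe_pow, hF_def,
            ← Real.enorm_eq_ofReal (hqmix0 x), enorm_eq_nnnorm]
          ring
        rw [lintegral_congr he]
        exact lt_top_iff_ne_top.mpr hKtop
      have hM_eq : M = (N : ℝ)⁻¹ * ∑ i, Mi i := by
        have h1 : (fun x => f x ^ 2 * qmix x)
            = fun x => (N : ℝ)⁻¹ * ∑ i, f x ^ 2 * q i x := by
          funext x
          rw [← Finset.mul_sum, hqmix]
          ring
        rw [hM_def, h1, integral_const_mul, integral_finset_sum _ fun i _ => hMiint i]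
      -- expectations
      have hEX : ∀ i, ∫ ω, f (X i ω) ∂μ = a i := by
        intro i
        rw [← integral_map (hXm i).aemeasurable hfm.aestronglyMeasurable, hXlaw i]
        rw [show (fun x => ENNReal.ofReal (q i x))
            = fun x => ((q i x).toNNReal : ℝ≥0∞) from rfl]
        rw [integral_withDensity_eq_integral_smul (hqm i).real_toNNReal f]
        rw [ha' i]
        refine integral_congr_ae (ae_of_all _ fun x => ?_)
        simp only [NNReal.smul_def, smul_eq_mul]
        rw [Real.coe_toNNReal _ (hq0 i x), mul_comm]
      have hEY : ∀ i, ∫ ω, f (Y i ω) ∂μ = I := by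
        intro i
        rw [← integral_map (hYm i).aemeasurable hfm.aestronglyMeasurable, hYlaw i]
        rw [show (fun x => ENNReal.ofReal (qmix x))
            = fun x => ((qmix x).toNNReal : ℝ≥0∞) from rfl]
        rw [integral_withDensity_eq_integral_smul hqmixm.real_toNNReal f]
        rw [← hIeq]
        refine integral_congr_ae (ae_of_all _ fun x => ?_)
        simp only [NNReal.smul_def, smul_eq_mul]
        rw [Real.coe_toNNReal _ (hqmix0 x), mul_comm]
      have hEX2 : ∀ i, ∫ ω, f (X i ω) ^ 2 ∂μ = Mi i := by
        intro i
        have := integral_map (μ := μ) (hXm i).aemeasurable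
          (f := fun x => f x ^ 2) ((hfm.pow_const 2)).aestronglyMeasurable
        rw [← this, hXlaw i]
        rw [show (fun x => ENNReal.ofReal (q i x))
            = fun x => ((q i x).toNNReal : ℝ≥0∞) from rfl]
        rw [integral_withDensity_eq_integral_smul (hqm i).real_toNNReal (fun x => f x ^ 2)]
        rw [hMi_def]
        refine integral_congr_ae (ae_of_all _ fun x => ?_)
        simp only [NNReal.smul_def, smul_eq_mul]
        rw [Real.coe_toNNReal _ (hq0 i x), mul_comm]
      have hEY2 : ∀ i, ∫ ω, f (Y i ω) ^ 2 ∂μ = M := by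
        intro i
        have := integral_map (μ := μ) (hYm i).aemeasurable
          (f := fun x => f x ^ 2) ((hfm.pow_const 2)).aestronglyMeasurable
        rw [← this, hYlaw i]
        rw [show (fun x => ENNReal.ofReal (qmix x))
            = fun x => ((qmix x).toNNReal : ℝ≥0∞) from rfl]
        rw [integral_withDensity_eq_integral_smul hqmixm.real_toNNReal (fun x => f x ^ 2)]
        rw [hM_def]
        refine integral_congr_ae (ae_of_all _ fun x => ?_)
        simp only [NNReal.smul_def, smul_eq_mul]
        rw [Real.coe_toNNReal _ (hqmix0 x), mul_comm]
      -- variances of single terms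
      have hvarX : ∀ i, variance (fun ω => f (X i ω)) μ = Mi i - a i ^ 2 := by
        intro i
        rw [variance_eq_sub (hmemX i)]
        simp only [Pi.pow_apply]
        rw [hEX2 i, hEX i]
      have hvarY : ∀ i, variance (fun ω => f (Y i ω)) μ = M - I ^ 2 := by
        intro i
        rw [variance_eq_sub (hmemY i)]
        simp only [Pi.pow_apply]
        rw [hEY2 i, hEY i]
      -- variance of sums
      have hsumfunX : (∑ i, fun ω => f (X i ω)) = fun ω => ∑ i, f (X i ω) := by
        funext ω; simp [Finset.sum_apply]
      have hsumfunY : (∑ i, fun ω => f (Y i ω)) = fun ω => ∑ i, f (Y i ω) := by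
        funext ω; simp [Finset.sum_apply]
      have hpairX : Set.Pairwise ↑(Finset.univ : Finset (Fin N))
          fun i j => IndepFun (fun ω => f (X i ω)) (fun ω => f (X j ω)) μ :=
        fun i _ j _ hij => hXind2.indepFun hij
      have hpairY : Set.Pairwise ↑(Finset.univ : Finset (Fin N))
          fun i j => IndepFun (fun ω => f (Y i ω)) (fun ω => f (Y j ω)) μ :=
        fun i _ j _ hij => hYind2.indepFun hij
      have hvarSX : variance (fun ω => ∑ i, f (X i ω)) μ = ∑ i, (Mi i - a i ^ 2) := by
        rw [← hsumfunX, IndepFun.variance_sum (fun i _ => hmemX i) hpairX]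
        exact Finset.sum_congr rfl fun i _ => hvarX i
      have hvarSY : variance (fun ω => ∑ i, f (Y i ω)) μ = ∑ _i : Fin N, (M - I ^ 2) := by
        rw [← hsumfunY, IndepFun.variance_sum (fun i _ => hmemY i) hpairY]
        exact Finset.sum_congr rfl fun i _ => hvarY i
      -- Memℒp of scaled sums
      have hmemSX : MemLp (fun ω => (N : ℝ)⁻¹ * ∑ i, f (X i ω)) 2 μ := by
        have h1 : MemLp (fun ω => ∑ i, f (X i ω)) 2 μ := by
          rw [← hsumfunX]; exact memLp_finset_sum' _ fun i _ => hmemX i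
        exact h1.const_mul _
      have hmemSY : MemLp (fun ω => (N : ℝ)⁻¹ * ∑ i, f (Y i ω)) 2 μ := by
        have h1 : MemLp (fun ω => ∑ i, f (Y i ω)) 2 μ := by
          rw [← hsumfunY]; exact memLp_finset_sum' _ fun i _ => hmemY i
        exact h1.const_mul _
      -- reduce to real variance computations
      rw [← hmemSX.ofReal_variance_eq, ← hmemSY.ofReal_variance_eq,
        variance_const_mul ((N : ℝ)⁻¹) (fun ω => ∑ i, f (X i ω)),
        variance_const_mul ((N : ℝ)⁻¹) (fun ω => ∑ i, f (Y i ω)),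
        hvarSX, hvarSY]
      -- nonnegativity of the correction term
      have hcs : ((N : ℝ) * I) ^ 2 ≤ N * ∑ j, a j ^ 2 := by
        have := sq_sum_le_card_mul_sum_sq (s := (Finset.univ : Finset (Fin N)))
          (f := a)
        rw [hasum] at this
        simpa using this
      have hcor : 0 ≤ (N : ℝ)⁻¹ * ((N : ℝ)⁻¹ * ∑ j, a j ^ 2 - I ^ 2) := by
        have h2 : I ^ 2 ≤ (N : ℝ)⁻¹ * ∑ j, a j ^ 2 := by
          rw [mul_pow] at hcs
          have h3 := mul_le_mul_of_nonneg_left hcs (by positivity : (0:ℝ) ≤ (N : ℝ)⁻¹ * (N:ℝ)⁻¹)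
          calc I ^ 2 = (N : ℝ)⁻¹ * (N : ℝ)⁻¹ * ((N:ℝ)^2 * I ^2) := by
                field_simp
              _ ≤ (N : ℝ)⁻¹ * (N : ℝ)⁻¹ * ((N:ℝ) * ∑ j, a j ^ 2) := h3
              _ = (N : ℝ)⁻¹ * ∑ j, a j ^ 2 := by field_simp
        linarith [mul_nonneg (by positivity : (0:ℝ) ≤ (N:ℝ)⁻¹)
          (sub_nonneg.mpr h2)]
      have hvXnn : 0 ≤ ∑ i, (Mi i - a i ^ 2) := by
        rw [← hvarSX]; exact variance_nonneg _ _
      rw [← ENNReal.ofReal_add (by positivity) hcor]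
      congr 1
      rw [Finset.sum_const, Finset.card_univ, Fintype.card_fin, nsmul_eq_mul,
        Finset.sum_sub_distrib, hM_eq]
      field_simp
      ring
  refine ⟨main, ?_⟩
  rw [main]
  exact le_self_add
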